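/- Let k₁, …, kₙ be positive integers with gcd(k₁, …, kₙ) = 1, and for each i choose a sign εᵢ ∈ {+1, −1}. Then any common divisor in ℤ[t, t⁻¹] of the elements (1 + εᵢ t^{kᵢ}), for i = 1, …, n, is a unit times a divisor of (1 − t) or of (1 + t); moreover (1 − t) and (1 + t) cannot both be common divisors. -/

import Mathlib

open LaurentPolynomial

instance : IsDomain (LaurentPolynomial ℤ) := NoZeroDivisors.to_isDomain _

/-- Evaluation of a Laurent polynomial over `ℤ` at a unit `u : ℤˣ`. -/
noncomputable def lEval (u : ℤˣ) : LaurentPolynomial ℤ →+* ℤ :=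
  (AddMonoidAlgebra.lift ℤ ℤ ℤ ((Units.coeHom ℤ).comp ((zpowersHom ℤˣ) u))).toRingHom

lemma lEval_T (u : ℤˣ) (n : ℤ) : lEval u (T n) = ((u ^ n : ℤˣ) : ℤ) := by
  simp only [lEval, T, AlgHom.toRingHom_eq_coe, RingHom.coe_coe,
    AddMonoidAlgebra.lift_single, one_smul, MonoidHom.comp_apply, Units.coeHom_apply]
  rfl

lemma lEval_C (u : ℤˣ) (a : ℤ) : lEval u (C a) = a := by
  simp only [lEval, LaurentPolynomial.C, AlgHom.toRingHom_eq_coe, RingHom.coe_coe]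
  simp [AddMonoidAlgebra.singleZeroRingHom, AddMonoidAlgebra.lift_single]

example : lEval (-1) (T 1) = -1 := by rw [lEval_T]; simp
example : lEval 1 (T 1) = 1 := by rw [lEval_T]; simp

lemma prime_toLaurent_X_sub_C (a : ℤ) (ha : a ≠ 0) :
    Prime (Polynomial.toLaurent (Polynomial.X - Polynomial.C a)) := by
  have hp : Prime (Polynomial.X - Polynomial.C a : Polynomial ℤ) := Polynomial.prime_X_sub_C a
  haveI := LaurentPolynomial.isLocalization (R := ℤ)
  set M := Submonoid.powers (Polynomial.X : Polynomial ℤ)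
  set I : Ideal (Polynomial ℤ) := Ideal.span {Polynomial.X - Polynomial.C a}
  have hI : I.IsPrime := (Ideal.span_singleton_prime hp.ne_zero).mpr hp
  have hd : Disjoint (M : Set (Polynomial ℤ)) (I : Set (Polynomial ℤ)) := by
    rw [Set.disjoint_left]
    rintro x ⟨m, rfl⟩ hx
    have hdvd : (Polynomial.X - Polynomial.C a) ∣ Polynomial.X ^ m :=
      (Ideal.mem_span_singleton).1 hx
    have : ((Polynomial.evalRingHom a) (Polynomial.X - Polynomial.C a)) ∣ (Polynomial.evalRingHom a) (Polynomial.X ^ m) := map_dvd _ hdvd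
    simp only [map_pow, Polynomial.coe_evalRingHom, Polynomial.eval_sub,
      Polynomial.eval_X, Polynomial.eval_C, sub_self, Polynomial.eval_pow] at this
    have h0 : a ^ m = 0 := zero_dvd_iff.mp this
    exact ha (pow_eq_zero_iff'.mp h0).1
  have hmap : (Ideal.map (algebraMap (Polynomial ℤ) (LaurentPolynomial ℤ)) I).IsPrime :=
    IsLocalization.isPrime_of_isPrime_disjoint M _ I hI hd
  rw [Ideal.map_span, Set.image_singleton, algebraMap_eq_toLaurent] at hmap
  exact (Ideal.span_singleton_prime (by
    rw [Ne, Polynomial.toLaurent_eq_zero]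
    exact hp.ne_zero)).mp hmap

lemma prime_one_sub_T : Prime (1 - T 1 : LaurentPolynomial ℤ) := by
  have h := prime_toLaurent_X_sub_C 1 one_ne_zero
  have : Polynomial.toLaurent (Polynomial.X - Polynomial.C (1:ℤ)) = T 1 - 1 := by
    simp [map_sub]
  rw [this] at h
  have := h.neg
  rwa [neg_sub] at this

lemma prime_one_add_T : Prime (1 + T 1 : LaurentPolynomial ℤ) := by
  have h := prime_toLaurent_X_sub_C (-1) (by norm_num)
  have : Polynomial.toLaurent (Polynomial.X - Polynomial.C (-1:ℤ)) = 1 + T 1 := by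
    simp [map_sub, map_neg]; ring
  rwa [this] at h

lemma one_sub_T_dvd_mul (a : ℤ) (q : ℕ) :
    (1 - T a : LaurentPolynomial ℤ) ∣ (1 - T (q * a)) := by
  induction q with
  | zero => simp
  | succ q ih =>
    have : (1 - T ((q+1 : ℕ) * a) : LaurentPolynomial ℤ)
        = (1 - T (q * a)) + T (q * a) * (1 - T a) := by
      push_cast
      rw [show ((q : ℤ) + 1) * a = q * a + a by ring, T_add]
      ring
    rw [this]
    exact dvd_add ih (Dvd.dvd.mul_left dvd_rfl _)

lemma dvd_one_sub_T_gcd (p : LaurentPolynomial ℤ) :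
    ∀ a : ℕ, ∀ b : ℕ, p ∣ 1 - T (a : ℤ) → p ∣ 1 - T (b : ℤ) →
      p ∣ 1 - T ((Nat.gcd a b : ℕ) : ℤ) := by
  intro a
  induction a using Nat.strong_induction_on with
  | _ a ih =>
    intro b ha hb
    rcases Nat.eq_zero_or_pos a with rfl | hpos
    · simpa [Nat.gcd_zero_left] using hb
    · rw [Nat.gcd_rec a b]
      have hmul : p ∣ 1 - T (((b / a * a : ℕ)) : ℤ) := by
        have h2 := ha.trans (one_sub_T_dvd_mul (a : ℤ) (b / a))
        rwa [show ((b / a : ℕ) : ℤ) * (a : ℤ) = (((b / a * a : ℕ)) : ℤ) by push_cast; ring] at h2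
      have key : (1 - T ((b % a : ℕ) : ℤ) : LaurentPolynomial ℤ)
          = (1 - T (b : ℤ)) - (1 - T (((b / a * a : ℕ)) : ℤ)) * T ((b % a : ℕ) : ℤ) := by
        have hb' : (b : ℤ) = ((b / a * a : ℕ) : ℤ) + ((b % a : ℕ) : ℤ) := by
          exact_mod_cast (Nat.div_add_mod' b a).symm
        rw [hb', T_add]
        ring
      have hr : p ∣ 1 - T ((b % a : ℕ) : ℤ) := by
        rw [key]
        exact dvd_sub hb (Dvd.dvd.mul_right hmul _)
      exact ih (b % a) (Nat.mod_lt b hpos) a hr ha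

lemma dvd_one_sub_T_finset_gcd {ι : Type*} [DecidableEq ι] (p : LaurentPolynomial ℤ)
    (s : Finset ι) (f : ι → ℕ) (h : ∀ i ∈ s, p ∣ 1 - T ((f i : ℕ) : ℤ)) :
    p ∣ 1 - T ((s.gcd f : ℕ) : ℤ) := by
  induction s using Finset.induction_on with
  | empty => simp
  | insert a s' hni ih =>
    rw [Finset.gcd_insert]
    have h1 := h a (Finset.mem_insert_self a s')
    have h2 := ih (fun i hi => h i (Finset.mem_insert_of_mem hi))
    exact dvd_one_sub_T_gcd p (f a) (s'.gcd f) h1 h2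

lemma dvd_of_dvd_mul_prime {α : Type*} [CommMonoidWithZero α] [IsCancelMulZero α] {p q r : α}
    (hq : Prime q) (h : p ∣ q * r) (hnd : ¬ q ∣ p) : p ∣ r := by
  obtain ⟨s, hs⟩ := h
  have hqps : q ∣ p * s := ⟨r, hs.symm⟩
  rcases hq.2.2 p s hqps with hqp | hqs
  · exact absurd hqp hnd
  · obtain ⟨s', rfl⟩ := hqs
    refine ⟨s', ?_⟩
    have : q * r = q * (p * s') := by rw [hs]; exact mul_left_comm p q s'
    exact mul_left_cancel₀ hq.ne_zero this

theorem veering_common_divisors_of_one_pm_tk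
    (n : ℕ) (k : Fin n → ℕ) (hk : ∀ i, 0 < k i)
    (hgcd : Finset.univ.gcd k = 1)
    (ε : Fin n → ℤ) (hε : ∀ i, ε i = 1 ∨ ε i = -1) :
    (∀ p : LaurentPolynomial ℤ,
        (∀ i, p ∣ 1 + C (ε i) * T (k i : ℤ)) →
        (p ∣ 1 - T 1 ∨ p ∣ 1 + T 1)) ∧
    ¬ ((∀ i, (1 - T 1 : LaurentPolynomial ℤ) ∣ 1 + C (ε i) * T (k i : ℤ)) ∧
       (∀ i, (1 + T 1 : LaurentPolynomial ℤ) ∣ 1 + C (ε i) * T (k i : ℤ))) := by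
  -- Part 2 first
  have part2 : ¬ ((∀ i, (1 - T 1 : LaurentPolynomial ℤ) ∣ 1 + C (ε i) * T (k i : ℤ)) ∧
       (∀ i, (1 + T 1 : LaurentPolynomial ℤ) ∣ 1 + C (ε i) * T (k i : ℤ))) := by
    rintro ⟨h1, h2⟩
    have heps : ∀ i, ε i = -1 := by
      intro i
      have hd := map_dvd (lEval 1) (h1 i)
      simp only [map_sub, map_add, map_one, map_mul, lEval_T, lEval_C, one_zpow,
        Units.val_one] at hd
      have : (0 : ℤ) ∣ 1 + ε i := by simpa using hd
      have h0 : 1 + ε i = 0 := zero_dvd_iff.mp this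
      linarith
    have heven : ∀ i, 2 ∣ k i := by
      intro i
      have hd := map_dvd (lEval (-1)) (h2 i)
      simp only [map_add, map_one, map_mul, lEval_T, lEval_C] at hd
      have hu : (((-1 : ℤˣ) ^ (1 : ℤ) : ℤˣ) : ℤ) = -1 := by simp
      rw [hu] at hd
      have hd0 : (0 : ℤ) ∣ 1 + ε i * (((-1 : ℤˣ) ^ ((k i : ℤ)) : ℤˣ) : ℤ) := by
        simpa using hd
      have h0 := zero_dvd_iff.mp hd0
      rw [heps i] at h0
      have hpow : (((-1 : ℤˣ) ^ ((k i : ℤ)) : ℤˣ) : ℤ) = (-1 : ℤ) ^ (k i) := by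
        rw [zpow_natCast]
        push_cast
        ring
      rw [hpow] at h0
      have : ((-1 : ℤ)) ^ (k i) = 1 := by linarith
      exact (neg_one_pow_eq_one_iff_even (by norm_num)).mp this |>.two_dvd
    have : (2 : ℕ) ∣ Finset.univ.gcd k := Finset.dvd_gcd fun i _ => heven i
    rw [hgcd] at this
    omega
  refine ⟨?_, part2⟩
  intro p hp
  -- p divides 1 - T (2 k i)
  have hdvd2 : ∀ i ∈ Finset.univ, p ∣ 1 - T (((2 * k i : ℕ)) : ℤ) := by
    intro i _
    have h := (hp i).mul_right (1 - C (ε i) * T (k i : ℤ))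
    have hmul : (1 + C (ε i) * T (k i : ℤ)) * (1 - C (ε i) * T (k i : ℤ))
        = 1 - T (((2 * k i : ℕ)) : ℤ) := by
      have hsq : ε i * ε i = 1 := by rcases hε i with h | h <;> rw [h] <;> norm_num
      have : (C (ε i) * T (k i : ℤ)) * (C (ε i) * T (k i : ℤ))
          = T (((2 * k i : ℕ)) : ℤ) := by
        rw [show (C (ε i) * T (k i : ℤ)) * (C (ε i) * T (k i : ℤ))
            = (C (ε i) * C (ε i)) * (T (k i : ℤ) * T (k i : ℤ)) by ring,
          ← map_mul, hsq, map_one, ← T_add, one_mul]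
        congr 1
        push_cast
        ring
      calc (1 + C (ε i) * T (k i : ℤ)) * (1 - C (ε i) * T (k i : ℤ))
          = 1 - (C (ε i) * T (k i : ℤ)) * (C (ε i) * T (k i : ℤ)) := by ring
        _ = 1 - T (((2 * k i : ℕ)) : ℤ) := by rw [this]
    rwa [hmul] at h
  have hgcd2 : p ∣ 1 - T ((Finset.univ.gcd (fun i => 2 * k i) : ℕ) : ℤ) :=
    dvd_one_sub_T_finset_gcd p Finset.univ (fun i => 2 * k i) hdvd2
  have hg2 : Finset.univ.gcd (fun i => 2 * k i) = 2 := by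
    rw [Finset.gcd_mul_left, hgcd]
    simp
  rw [hg2] at hgcd2
  have hfact : (1 - T ((2 : ℕ) : ℤ) : LaurentPolynomial ℤ) = (1 - T 1) * (1 + T 1) := by
    rw [show (((2 : ℕ) : ℤ)) = 1 + 1 by norm_num, T_add]
    ring
  rw [hfact] at hgcd2
  by_cases h1 : (1 - T 1 : LaurentPolynomial ℤ) ∣ p
  · by_cases h2 : (1 + T 1 : LaurentPolynomial ℤ) ∣ p
    · exact absurd ⟨fun i => h1.trans (hp i), fun i => h2.trans (hp i)⟩ part2
    · left
      rw [mul_comm] at hgcd2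
      exact dvd_of_dvd_mul_prime prime_one_add_T hgcd2 h2
  · right
    exact dvd_of_dvd_mul_prime prime_one_sub_T hgcd2 h1
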